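/- For the eigenvalue α = −b in the simple-shear moment eigenvalue problem (with K ≠ 0), the space of symmetric solutions Γ is exactly the two-dimensional complex space { Γ₁₁ = μ₁, Γ₃₃ = −μ₁, Γ₁₃ = μ₂, Γ₁₂ = Γ₂₂ = Γ₂₃ = 0 : μ₁, μ₂ ∈ ℂ }. -/

import Mathlib

/-- The simple-shear moment eigenvalue system for a symmetric `Γ`. -/
def ShearSystem (b K : ℝ) (α : ℂ) (Γ : Matrix (Fin 3) (Fin 3) ℂ) : Prop :=
  letI Γbar : ℂ := (Γ 0 0 + Γ 1 1 + Γ 2 2) / 3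
  (α / b + 1) * Γ 0 0 + (K / b) * Γ 0 1 = Γbar ∧
  (α / b + 1) * Γ 0 1 + (K / (2 * b)) * Γ 1 1 = 0 ∧
  (α / b + 1) * Γ 0 2 + (K / (2 * b)) * Γ 1 2 = 0 ∧
  (α / b + 1) * Γ 1 1 = Γbar ∧
  (α / b + 1) * Γ 1 2 = 0 ∧
  (α / b + 1) * Γ 2 2 = Γbar

/-- for the eigenvalue `α = −b` of the simple-shear moment
system (with `K ≠ 0`), the space of symmetric solutions is exactly the
two-parameter family `Γ₁₁ = μ₁, Γ₃₃ = −μ₁, Γ₁₃ = μ₂`, all other entries `0`. -/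
theorem stmt14 (b K : ℝ) (hb : 0 < b) (hK : K ≠ 0) :
    {Γ : Matrix (Fin 3) (Fin 3) ℂ | Γ.IsSymm ∧ ShearSystem b K (-b) Γ} =
      {Γ : Matrix (Fin 3) (Fin 3) ℂ | ∃ μ1 μ2 : ℂ,
        Γ = !![μ1, 0, μ2; 0, 0, 0; μ2, 0, -μ1]} := by
  have hb' : (b : ℂ) ≠ 0 := by exact_mod_cast hb.ne'
  have hK' : (K : ℂ) ≠ 0 := by exact_mod_cast hK
  have hz : (-b : ℂ) / b + 1 = 0 := by field_simp; norm_num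
  ext Γ
  simp only [Set.mem_setOf_eq, ShearSystem, hz, zero_mul, zero_add, add_zero]
  constructor
  · rintro ⟨hsym, h1, h2, h3, h4, -, -⟩
    have hbar : Γ 0 0 + Γ 1 1 + Γ 2 2 = 0 := by
      linear_combination -3 * h4
    have h11 : Γ 1 1 = 0 := by
      have : (K : ℂ) / (2 * b) ≠ 0 := div_ne_zero hK' (by simpa using hb')
      exact (mul_eq_zero.mp h2).resolve_left this
    have h01 : Γ 0 1 = 0 := by
      have hz2 : (K : ℂ) / b * Γ 0 1 = 0 := by rw [h1, ← h4]
      have : (K : ℂ) / b ≠ 0 := div_ne_zero hK' hb'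
      exact (mul_eq_zero.mp hz2).resolve_left this
    have h12 : Γ 1 2 = 0 := by
      have hne : (K : ℂ) / (2 * b) ≠ 0 := div_ne_zero hK' (by simpa using hb')
      exact (mul_eq_zero.mp h3).resolve_left hne
    have h22 : Γ 2 2 = -(Γ 0 0) := by
      linear_combination hbar - h11
    refine ⟨Γ 0 0, Γ 0 2, ?_⟩
    ext i j
    fin_cases i <;> fin_cases j <;>
      simp [Matrix.cons_val', Matrix.cons_val_zero, Matrix.cons_val_one, h11, h01, h12, h22]
    · exact (hsym.apply 1 0).symm.trans h01
    · exact (hsym.apply 2 0).symm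
    · exact (hsym.apply 2 1).symm.trans h12
  · rintro ⟨μ1, μ2, rfl⟩
    refine ⟨?_, ?_, ?_, ?_, ?_, ?_, ?_⟩ <;>
      simp [Matrix.IsSymm, Matrix.transpose]
    · ext i j; fin_cases i <;> fin_cases j <;> simp [Matrix.vecHead, Matrix.vecTail]
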